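/- Every m×m integer matrix admits at least one canon. In particular, taking λ_i = Λ − (row adjustment from an optimal assignment), one can always find nonnegative integers λ_1,…,λ_m such that (a_{i,j}+λ_i) has m transversal column-maxima. -/

import Mathlib

/-- `lam` is a canon for the `m × m` integer matrix `A`: in the matrix `(A i j + lam i)`
there are `m` column-maximal entries lying in pairwise distinct rows and columns. -/
def IsCanon {m : ℕ} (A : Matrix (Fin m) (Fin m) ℤ) (lam : Fin m → ℕ) : Prop :=
  ∃ σ : Equiv.Perm (Fin m), ∀ i k : Fin m,
    A k (σ i) + (lam k : ℤ) ≤ A i (σ i) + (lam i : ℤ)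



namespace CanonProof

variable {m : ℕ}

/-- reduced cost of edge `k → i`. -/
def rc (A : Matrix (Fin m) (Fin m) ℤ) (σ : Equiv.Perm (Fin m)) (k i : Fin m) : ℤ :=
  A k (σ i) - A i (σ i)

/-- weight of a walk of `L` steps. -/
def wt (A : Matrix (Fin m) (Fin m) ℤ) (σ : Equiv.Perm (Fin m)) (w : ℕ → Fin m) (L : ℕ) : ℤ :=
  ∑ j ∈ Finset.range L, rc A σ (w j) (w (j + 1))

variable (A : Matrix (Fin m) (Fin m) ℤ) (σ : Equiv.Perm (Fin m))

lemma wt_split (w : ℕ → Fin m) (p q L : ℕ) (hpq : p ≤ q) (hqL : q ≤ L) (hw : w p = w q) :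
    wt A σ w L = wt A σ (fun j => if j < p then w j else w (j + (q - p))) (p + (L - q))
      + wt A σ (fun j => w (j + p)) (q - p) := by
  set d := q - p with hd
  set w' : ℕ → Fin m := fun j => if j < p then w j else w (j + d) with hw'
  have hw'le : ∀ j, j ≤ p → w' j = w j := by
    intro j hj
    rcases lt_or_eq_of_le hj with h | h
    · simp [hw', h]
    · subst h
      simp only [hw', lt_irrefl, if_false]
      have : j + d = q := by omega
      rw [this, ← hw]
  have hw'ge : ∀ j, p ≤ j → w' j = w (j + d) := by
    intro j hj
    rcases lt_or_eq_of_le hj with h | h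
    · simp [hw', Nat.not_lt.2 (le_of_lt h)]
    · subst h
      simp only [hw', lt_irrefl, if_false]
  have hL : L = p + (d + (L - q)) := by omega
  rw [show wt A σ w L = wt A σ w (p + (d + (L - q))) by rw [← hL]]
  unfold wt
  rw [Finset.sum_range_add, Finset.sum_range_add, Finset.sum_range_add]
  have e1 : ∀ j ∈ Finset.range p, rc A σ (w' j) (w' (j+1)) = rc A σ (w j) (w (j+1)) := by
    intro j hj
    rw [Finset.mem_range] at hj
    rw [hw'le j (le_of_lt hj), hw'le (j+1) hj]
  have e2 : ∀ j ∈ Finset.range (L - q),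
      rc A σ (w' (p + j)) (w' (p + j + 1)) = rc A σ (w (p + (d + j))) (w (p + (d + j) + 1)) := by
    intro j hj
    rw [hw'ge (p+j) (Nat.le_add_right _ _), hw'ge (p+j+1) (by omega)]
    congr 2 <;> omega
  have e3 : ∀ j ∈ Finset.range d,
      rc A σ (w (j + p)) (w (j + 1 + p)) = rc A σ (w (p + j)) (w (p + j + 1)) := by
    intro j _
    congr 2 <;> omega
  rw [Finset.sum_congr rfl e1, Finset.sum_congr rfl e2, Finset.sum_congr rfl e3]
  ring

end CanonProof

namespace CanonProof
variable {m : ℕ} (A : Matrix (Fin m) (Fin m) ℤ) (σ : Equiv.Perm (Fin m))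

lemma wt_closed (hσ : ∀ τ : Equiv.Perm (Fin m), ∑ i, A i (τ i) ≤ ∑ i, A i (σ i)) :
    ∀ L, ∀ w : ℕ → Fin m, w L = w 0 → wt A σ w L ≤ 0 := by
  intro L
  induction L using Nat.strong_induction_on with
  | _ L IH =>
  intro w hclosed
  rcases Nat.eq_zero_or_pos L with rfl | hL
  · simp [wt]
  by_cases hinj : ∀ p < L, ∀ q < L, w p = w q → p = q
  · -- injective case: use the cycle permutation
    set l : List (Fin m) := (List.range L).map w with hl
    have hlen : l.length = L := by simp [hl]
    have hnd : l.Nodup := by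
      refine List.Nodup.map_on ?_ List.nodup_range
      intro p hp q hq h
      exact hinj p (List.mem_range.mp hp) q (List.mem_range.mp hq) h
    have hget : ∀ j (h : j < L), l[j]'(by omega) = w j := by
      intro j h; simp [hl]
    set π := l.formPerm with hπ
    have key1 : ∀ j, j < L → π (w j) = w (j + 1) := by
      intro j hj
      have hjlen : j < l.length := by omega
      rw [← hget j hj, hπ, List.formPerm_apply_getElem _ hnd j hjlen]
      have hmodlt : (j + 1) % l.length < L := by
        rw [hlen]; exact Nat.mod_lt _ hL
      rw [hget _ hmodlt]
      rcases Nat.lt_or_ge (j + 1) L with h | h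
      · congr 1; rw [hlen]; exact Nat.mod_eq_of_lt h
      · have hjL : j + 1 = L := by omega
        rw [hjL, hlen, Nat.mod_self, ← hclosed]
    have key2 : ∀ x, x ∉ l → π x = x := fun x hx => List.formPerm_apply_of_notMem hx
    set s : Finset (Fin m) := (Finset.range L).image w with hs
    have hmem : ∀ x, x ∈ s ↔ x ∈ l := by
      intro x
      simp [hs, hl, List.mem_map, Finset.mem_image]
    have hΔ : ∑ i, (A i (σ (π i)) - A i (σ i)) =
        ∑ j ∈ Finset.range L, (A (w j) (σ (w (j + 1))) - A (w j) (σ (w j))) := by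
      rw [← Finset.sum_subset (Finset.subset_univ s)
        (by intro x _ hx; rw [key2 x (fun h => hx ((hmem x).2 h))]; ring)]
      rw [hs, Finset.sum_image (by
        intro p hp q hq h
        exact hinj p (Finset.mem_range.mp hp) q (Finset.mem_range.mp hq) h)]
      refine Finset.sum_congr rfl ?_
      intro j hj
      rw [key1 j (Finset.mem_range.mp hj)]
    have htel : ∑ j ∈ Finset.range L, (A (w j) (σ (w j)) - A (w (j + 1)) (σ (w (j + 1)))) = 0 := by
      rw [Finset.sum_range_sub' (fun j => A (w j) (σ (w j)))]
      rw [hclosed]; ring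
    have hwt : wt A σ w L = ∑ i, (A i (σ (π i)) - A i (σ i)) := by
      rw [hΔ]
      unfold wt rc
      rw [← sub_eq_zero, ← Finset.sum_sub_distrib, ← htel]
      refine Finset.sum_congr rfl ?_
      intro j _
      ring
    rw [hwt]
    have := hσ (π.trans σ)
    simp only [Equiv.trans_apply] at this
    rw [Finset.sum_sub_distrib]
    omega
  · -- non-injective: split off a closed subwalk
    push_neg at hinj
    obtain ⟨p, hp, q, hq, hwpq, hne⟩ := hinj
    have main : ∀ p q : ℕ, p < q → q < L → w p = w q → wt A σ w L ≤ 0 := by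
      intro p q hlt hqL hwpq
      have hsplit := wt_split A σ w p q L (le_of_lt hlt) (le_of_lt hqL) hwpq
      have h2 : wt A σ (fun j => w (j + p)) (q - p) ≤ 0 := by
        apply IH (q - p) (by omega)
        show w (q - p + p) = w (0 + p)
        rw [show q - p + p = q by omega, Nat.zero_add]
        exact hwpq.symm
      have h1 : wt A σ (fun j => if j < p then w j else w (j + (q - p))) (p + (L - q)) ≤ 0 := by
        apply IH (p + (L - q)) (by omega)
        show (if p + (L - q) < p then w (p + (L - q)) else w (p + (L - q) + (q - p)))
           = (if 0 < p then w 0 else w (0 + (q - p)))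
        rw [if_neg (by omega), show p + (L - q) + (q - p) = L by omega, hclosed]
        rcases Nat.eq_zero_or_pos p with rfl | hp0
        · rw [if_neg (by omega)]
          rw [show 0 + (q - 0) = q by omega]
          exact hwpq
        · rw [if_pos hp0]
      rw [hsplit]
      exact add_nonpos h1 h2
    rcases Nat.lt_or_ge p q with hlt | hge
    · exact main p q hlt hq hwpq
    · exact main q p (by omega) hp hwpq.symm

end CanonProof

namespace CanonProof
variable {m : ℕ} (A : Matrix (Fin m) (Fin m) ℤ) (σ : Equiv.Perm (Fin m))

def tot : ℤ := ∑ k, ∑ i, |A k i|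

lemma abs_le_tot (a b : Fin m) : |A a b| ≤ tot A := by
  calc |A a b| ≤ ∑ i, |A a i| :=
        Finset.single_le_sum (f := fun i => |A a i|) (fun i _ => abs_nonneg _) (Finset.mem_univ b)
    _ ≤ tot A := by
        unfold tot
        exact Finset.single_le_sum (f := fun k => ∑ i, |A k i|)
          (fun k _ => Finset.sum_nonneg fun i _ => abs_nonneg _) (Finset.mem_univ a)

def bnd : ℤ := 2 * tot A

lemma bnd_nonneg : 0 ≤ bnd A := by
  have : (0:ℤ) ≤ tot A := Finset.sum_nonneg fun k _ => Finset.sum_nonneg fun i _ => abs_nonneg _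
  unfold bnd; linarith

lemma rc_le (k i : Fin m) : rc A σ k i ≤ bnd A := by
  have h1 := abs_le_tot A k (σ i)
  have h2 := abs_le_tot A i (σ i)
  have h3 : A k (σ i) ≤ |A k (σ i)| := le_abs_self _
  have h4 : -A i (σ i) ≤ |A i (σ i)| := neg_le_abs _
  unfold rc bnd
  linarith

lemma wt_le (hσ : ∀ τ : Equiv.Perm (Fin m), ∑ i, A i (τ i) ≤ ∑ i, A i (σ i)) :
    ∀ L, ∀ w : ℕ → Fin m, wt A σ w L ≤ (m : ℤ) * bnd A := by
  intro L
  induction L using Nat.strong_induction_on with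
  | _ L IH =>
  intro w
  rcases le_or_gt L m with hLm | hmL
  · calc wt A σ w L ≤ ∑ _j ∈ Finset.range L, bnd A :=
          Finset.sum_le_sum fun j _ => rc_le A σ _ _
      _ = (L : ℤ) * bnd A := by rw [Finset.sum_const, Finset.card_range]; ring
      _ ≤ (m : ℤ) * bnd A :=
          mul_le_mul_of_nonneg_right (by exact_mod_cast hLm) (bnd_nonneg A)
  · -- pigeonhole on 0..m
    obtain ⟨p, hp, q, hq, hne, hwpq⟩ :=
      Finset.exists_ne_map_eq_of_card_lt_of_maps_to
        (s := Finset.range (m + 1)) (t := (Finset.univ : Finset (Fin m)))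
        (by simp) (fun a _ => Finset.mem_univ (w a))
    rw [Finset.mem_range] at hp hq
    have main : ∀ p q : ℕ, p < q → q ≤ m → wt A σ w L ≤ (m : ℤ) * bnd A → True := fun _ _ _ _ _ => trivial
    clear main
    have key : ∀ p q : ℕ, p < q → q ≤ m → w p = w q → wt A σ w L ≤ (m : ℤ) * bnd A := by
      intro p q hlt hqm hwpq
      have hqL : q ≤ L := le_of_lt (lt_of_le_of_lt hqm hmL)
      have hsplit := wt_split A σ w p q L (le_of_lt hlt) hqL hwpq
      have h2 : wt A σ (fun j => w (j + p)) (q - p) ≤ 0 := by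
        apply wt_closed A σ hσ
        show w (q - p + p) = w (0 + p)
        rw [show q - p + p = q by omega, Nat.zero_add]
        exact hwpq.symm
      have h1 : wt A σ (fun j => if j < p then w j else w (j + (q - p))) (p + (L - q))
          ≤ (m : ℤ) * bnd A := IH (p + (L - q)) (by omega) _
      rw [hsplit]
      linarith
    rcases Nat.lt_or_ge p q with hlt | hge
    · exact key p q hlt (by omega) hwpq
    · exact key q p (by omega) (by omega) hwpq.symm

end CanonProof

namespace CanonProof
variable {m : ℕ} [NeZero m] (A : Matrix (Fin m) (Fin m) ℤ) (σ : Equiv.Perm (Fin m))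

noncomputable def f : ℕ → Fin m → ℤ
  | 0 => fun _ => 0
  | n + 1 => fun i =>
      max (f n i) (Finset.univ.sup' Finset.univ_nonempty (fun k => f n k + rc A σ k i))

lemma f_succ (n : ℕ) (i : Fin m) :
    f A σ (n + 1) i =
      max (f A σ n i)
        (Finset.univ.sup' Finset.univ_nonempty (fun k => f A σ n k + rc A σ k i)) := rfl

lemma f_mono (n : ℕ) (i : Fin m) : f A σ n i ≤ f A σ (n + 1) i := le_max_left _ _

lemma f_nonneg (n : ℕ) (i : Fin m) : 0 ≤ f A σ n i := by
  induction n with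
  | zero => exact le_refl _
  | succ n IH => exact le_trans IH (f_mono A σ n i)

lemma f_le_wt (n : ℕ) (i : Fin m) :
    ∃ L, ∃ w : ℕ → Fin m, w L = i ∧ f A σ n i ≤ wt A σ w L := by
  induction n generalizing i with
  | zero => exact ⟨0, fun _ => i, rfl, by simp [wt, f]⟩
  | succ n IH =>
    rcases le_or_gt (Finset.univ.sup' Finset.univ_nonempty (fun k => f A σ n k + rc A σ k i))
        (f A σ n i) with h | h
    · obtain ⟨L, w, hw, hle⟩ := IH i
      exact ⟨L, w, hw, by rw [f_succ]; exact le_trans (max_le (le_refl _) h) hle⟩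
    · obtain ⟨k, -, hk⟩ := Finset.exists_mem_eq_sup' Finset.univ_nonempty
        (fun k => f A σ n k + rc A σ k i)
      obtain ⟨L, w, hw, hle⟩ := IH k
      refine ⟨L + 1, fun j => if j = L + 1 then i else w j, by simp, ?_⟩
      have hwt : wt A σ (fun j => if j = L + 1 then i else w j) (L + 1)
          = wt A σ w L + rc A σ (w L) i := by
        unfold wt
        rw [Finset.sum_range_succ]
        congr 1
        · refine Finset.sum_congr rfl ?_
          intro j hj
          rw [Finset.mem_range] at hj
          beta_reduce
          rw [if_neg (by omega), if_neg (by omega)]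
        · beta_reduce
          rw [if_neg (by omega), if_pos rfl]
      rw [hwt, f_succ]
      have : f A σ n k + rc A σ k i ≤ wt A σ w L + rc A σ (w L) i := by
        rw [hw]; linarith
      rw [max_eq_right (le_of_lt h), hk]
      exact this

lemma f_bdd (hσ : ∀ τ : Equiv.Perm (Fin m), ∑ i, A i (τ i) ≤ ∑ i, A i (σ i))
    (n : ℕ) (i : Fin m) : f A σ n i ≤ (m : ℤ) * bnd A := by
  obtain ⟨L, w, _, hle⟩ := f_le_wt A σ n i
  exact le_trans hle (wt_le A σ hσ L w)

lemma exists_stab (hσ : ∀ τ : Equiv.Perm (Fin m), ∑ i, A i (τ i) ≤ ∑ i, A i (σ i)) :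
    ∃ n, ∀ i, f A σ (n + 1) i = f A σ n i := by
  by_contra h
  push_neg at h
  have hsum : ∀ n : ℕ, (n : ℤ) ≤ ∑ i, f A σ n i := by
    intro n
    induction n with
    | zero => simp [f]
    | succ n IH =>
      obtain ⟨i, hi⟩ := h n
      have hlt : ∑ i, f A σ n i < ∑ i, f A σ (n + 1) i :=
        Finset.sum_lt_sum (fun j _ => f_mono A σ n j)
          ⟨i, Finset.mem_univ i, lt_of_le_of_ne (f_mono A σ n i) (Ne.symm hi)⟩
      push_cast
      omega
  have hub : ∀ n : ℕ, ∑ i, f A σ n i ≤ (m : ℤ) * ((m : ℤ) * bnd A) := by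
    intro n
    calc ∑ i, f A σ n i ≤ ∑ _i : Fin m, (m : ℤ) * bnd A :=
          Finset.sum_le_sum fun i _ => f_bdd A σ hσ n i
      _ = (m : ℤ) * ((m : ℤ) * bnd A) := by
          rw [Finset.sum_const, Finset.card_univ, Fintype.card_fin]; ring
  set N : ℕ := ((m : ℤ) * ((m : ℤ) * bnd A)).toNat + 1 with hN
  have h1 := hsum N
  have h2 := hub N
  have h3 : ((m : ℤ) * ((m : ℤ) * bnd A)) ≤ (((m : ℤ) * ((m : ℤ) * bnd A)).toNat : ℤ) :=
    Int.self_le_toNat _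
  have h4 : (N : ℤ) = (((m : ℤ) * ((m : ℤ) * bnd A)).toNat : ℤ) + 1 := by
    rw [hN]; push_cast; ring
  omega

end CanonProof


/-- Every square integer matrix admits at least one canon. -/
theorem exists_canon {m : ℕ} (A : Matrix (Fin m) (Fin m) ℤ) :
    ∃ lam : Fin m → ℕ, IsCanon A lam := by
  rcases Nat.eq_zero_or_pos m with rfl | hm
  · exact ⟨fun _ => 0, Equiv.refl _, fun i => i.elim0⟩
  · haveI : NeZero m := ⟨hm.ne'⟩
    obtain ⟨σ, -, hσ⟩ := Finset.exists_max_image (Finset.univ : Finset (Equiv.Perm (Fin m)))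
      (fun τ => ∑ i, A i (τ i)) Finset.univ_nonempty
    have hσ' : ∀ τ : Equiv.Perm (Fin m), ∑ i, A i (τ i) ≤ ∑ i, A i (σ i) :=
      fun τ => hσ τ (Finset.mem_univ τ)
    obtain ⟨n, hn⟩ := CanonProof.exists_stab A σ hσ'
    refine ⟨fun i => (CanonProof.f A σ n i).toNat, σ, ?_⟩
    intro i k
    have hcoe : ∀ j : Fin m, ((CanonProof.f A σ n j).toNat : ℤ) = CanonProof.f A σ n j :=
      fun j => Int.toNat_of_nonneg (CanonProof.f_nonneg A σ n j)
    have key : CanonProof.f A σ n k + CanonProof.rc A σ k i ≤ CanonProof.f A σ n i := by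
      rw [← hn i, CanonProof.f_succ]
      exact le_trans (Finset.le_sup' (fun k => CanonProof.f A σ n k + CanonProof.rc A σ k i) (Finset.mem_univ k)) (le_max_right _ _)
    unfold CanonProof.rc at key
    rw [hcoe, hcoe]
    linarith
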